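/- Superuniformity of the weighted rank statistic (core finite claim underlying Theorems 1 and B.1). Let S be a nonempty finite set, w: S → [0,∞) with Σ_{s∈S} w(s) > 0, and V: S → ℝ. Define p(s) := [Σ_{s'∈S} w(s') · 1{V(s') ≥ V(s)}] / [Σ_{s'∈S} w(s')]. If Ŝ is a random element of S with P(Ŝ = s) = w(s) / Σ_{s'∈S} w(s') for every s ∈ S, then for every t ∈ [0,1], P( p(Ŝ) ≤ t ) ≤ t. -/
import Mathlib


open MeasureTheory
open scoped Classical

/-- **Superuniformity of the weighted rank statistic.**
`S` is a nonempty finite set, `w : S → [0,∞)` a weight function with positive total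
mass, `V : S → ℝ` a score function, and `Shat` a random element of `S` whose law is
the `w`-weighted distribution.  Then the weighted upper-tail rank
`p(Shat) = (∑_{s'} w s' · 1{V s' ≥ V (Shat)}) / (∑_{s'} w s')`
is stochastically larger than uniform: `P(p(Shat) ≤ t) ≤ t` for all `t ∈ [0,1]`. -/
theorem weighted_rank_superuniform
    {Ω S : Type*} [MeasurableSpace Ω] [Fintype S] [Nonempty S]
    (μ : Measure Ω) [IsProbabilityMeasure μ]
    (w : S → ℝ) (hw : ∀ s, 0 ≤ w s) (hpos : 0 < ∑ s, w s)
    (V : S → ℝ)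
    (Shat : Ω → S)
    (hlaw : ∀ s : S, μ {ω | Shat ω = s} = ENNReal.ofReal (w s / ∑ s', w s'))
    (t : ℝ) (ht0 : 0 ≤ t) (ht1 : t ≤ 1) :
    μ {ω | (∑ s', w s' * (if V (Shat ω) ≤ V s' then 1 else 0)) / (∑ s', w s') ≤ t}
      ≤ ENNReal.ofReal t := by
  set W := ∑ s, w s with hW
  set p : S → ℝ := fun s => (∑ s', w s' * (if V s ≤ V s' then 1 else 0)) / W with hp
  set A : Finset S := Finset.univ.filter (fun s => p s ≤ t) with hA
  -- the event is a union over A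
  have hset : {ω | p (Shat ω) ≤ t} ⊆ ⋃ s ∈ A, {ω | Shat ω = s} := by
    intro ω hω
    simp only [Set.mem_iUnion]
    exact ⟨Shat ω, by simpa [hA] using hω, rfl⟩
  have hsum : ∑ s ∈ A, w s ≤ t * W := by
    rcases A.eq_empty_or_nonempty with h | h
    · simp [h]
      positivity
    · obtain ⟨s0, hs0A, hs0min⟩ := A.exists_min_image V h
      have h1 : ∑ s ∈ A, w s ≤ ∑ s', w s' * (if V s0 ≤ V s' then 1 else 0) := by
        calc ∑ s ∈ A, w s = ∑ s ∈ A, w s * (if V s0 ≤ V s then 1 else 0) := by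
              apply Finset.sum_congr rfl
              intro s hs
              rw [if_pos (hs0min s hs), mul_one]
          _ ≤ ∑ s', w s' * (if V s0 ≤ V s' then 1 else 0) := by
              apply Finset.sum_le_sum_of_subset_of_nonneg (Finset.subset_univ A)
              intro s _ _
              have := hw s
              positivity
      have h2 : p s0 ≤ t := by
        have := hs0A
        simpa [hA] using this
      have h3 : ∑ s', w s' * (if V s0 ≤ V s' then 1 else 0) ≤ t * W := by
        have := (div_le_iff₀ hpos).mp h2
        simpa [hp] using this
      linarith
  calc μ {ω | p (Shat ω) ≤ t} ≤ μ (⋃ s ∈ A, {ω | Shat ω = s}) := measure_mono hset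
    _ ≤ ∑ s ∈ A, μ {ω | Shat ω = s} := measure_biUnion_finset_le A _
    _ = ∑ s ∈ A, ENNReal.ofReal (w s / W) := by
        apply Finset.sum_congr rfl; intro s _; exact hlaw s
    _ = ENNReal.ofReal (∑ s ∈ A, w s / W) := by
        rw [ENNReal.ofReal_sum_of_nonneg]
        intro s _
        have := hw s
        positivity
    _ ≤ ENNReal.ofReal t := by
        apply ENNReal.ofReal_le_ofReal
        rw [← Finset.sum_div, div_le_iff₀ hpos]
        linarith
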